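/- arXiv:2212.11365 — 8 statements merged into one kernel-verified Lean document; each statement's English description precedes it below -/
import Mathlib

section
/- Let α : ℝ → ℝ be locally Lipschitz, strictly monotonically increasing with α(0) = 0. Let y : ℝ → ℝ be differentiable on [0, ∞) and suppose deriv y t ≥ -α (y t) for all t ≥ 0. If y 0 ≥ 0 then y t ≥ 0 for all t ≥ 0. -/
/-- Scalar comparison lemma underlying CBF safety: if `deriv y t ≥ -α (y t)`
for all `t ≥ 0` with `α` locally Lipschitz, strictly increasing and `α 0 = 0`,
then `y 0 ≥ 0` implies `y t ≥ 0` for all `t ≥ 0`. -/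
theorem scalar_cbf_comparison
    (α : ℝ → ℝ) (hα_lip : LocallyLipschitz α) (hα_mono : StrictMono α)
    (hα_zero : α 0 = 0)
    (y : ℝ → ℝ) (hy : DifferentiableOn ℝ y (Set.Ici (0 : ℝ)))
    (hderiv : ∀ t : ℝ, t ≥ 0 → deriv y t ≥ -α (y t))
    (hy0 : y 0 ≥ 0) :
    ∀ t : ℝ, t ≥ 0 → y t ≥ 0 := by
  intro t1 ht1
  by_contra hneg
  push_neg at hneg
  have hycont : ContinuousOn y (Set.Ici (0 : ℝ)) := hy.continuousOn
  -- the set of times in [0, t1] where y ≥ 0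
  set S : Set ℝ := Set.Icc 0 t1 ∩ y ⁻¹' Set.Ici 0 with hS
  have hScont : ContinuousOn y (Set.Icc 0 t1) :=
    hycont.mono (fun x hx => hx.1)
  have hSclosed : IsClosed S :=
    hScont.preimage_isClosed_of_isClosed isClosed_Icc isClosed_Ici
  have hSne : S.Nonempty := ⟨0, ⟨le_refl 0, ht1⟩, hy0⟩
  have hSbdd : BddAbove S := ⟨t1, fun x hx => hx.1.2⟩
  set s := sSup S with hs
  have hsS : s ∈ S := hSclosed.csSup_mem hSne hSbdd
  have hs0 : 0 ≤ s := hsS.1.1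
  have hst1 : s ≤ t1 := hsS.1.2
  have hys : 0 ≤ y s := hsS.2
  have hslt : s < t1 := by
    rcases lt_or_eq_of_le hst1 with h | h
    · exact h
    · exact absurd (h ▸ hys) (not_le.mpr hneg)
  -- on (s, t1], y < 0
  have hylt : ∀ u, s < u → u ≤ t1 → y u < 0 := by
    intro u hsu hut1
    by_contra h
    push_neg at h
    have : u ∈ S := ⟨⟨hs0.trans hsu.le, hut1⟩, h⟩
    exact absurd (le_csSup hSbdd this) (not_le.mpr hsu)
  -- y is strictly mono on [s, t1]
  have hmono : StrictMonoOn y (Set.Icc s t1) := by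
    apply strictMonoOn_of_deriv_pos (convex_Icc s t1)
    · exact hScont.mono (fun x hx => ⟨hs0.trans hx.1, hx.2⟩)
    · intro x hx
      rw [interior_Icc] at hx
      have hx0 : 0 < x := lt_of_le_of_lt hs0 hx.1
      have hd := hderiv x hx0.le
      have hyx : y x < 0 := hylt x hx.1 hx.2.le
      have : α (y x) < 0 := hα_zero ▸ hα_mono hyx
      linarith
  have := hmono ⟨le_refl s, hst1⟩ ⟨hslt.le, le_refl t1⟩ hslt
  linarith
end

section
/- Let α : ℝ → ℝ be locally Lipschitz, strictly monotonically increasing with α(0) = 0. Let c ≥ 0 and let m ∈ ℝ satisfy α(m) = -c (so m ≤ 0). Let y : ℝ → ℝ be differentiable on [0, ∞) with deriv y t ≥ -α (y t) - c for all t ≥ 0. If y 0 ≥ m then y t ≥ m for all t ≥ 0. -/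
/-- ISSf scalar comparison: a constant disturbance `c` in the barrier-derivative
bound `deriv y ≥ -α (y) - c` yields forward invariance of `{y ≥ m}` where
`α m = -c`. -/
theorem scalar_issf_comparison
    (α : ℝ → ℝ) (hα_lip : LocallyLipschitz α) (hα_mono : StrictMono α)
    (hα_zero : α 0 = 0)
    (c : ℝ) (hc : c ≥ 0) (m : ℝ) (hm : α m = -c)
    (y : ℝ → ℝ) (hy : DifferentiableOn ℝ y (Set.Ici (0 : ℝ)))
    (hderiv : ∀ t : ℝ, t ≥ 0 → deriv y t ≥ -α (y t) - c)
    (hy0 : y 0 ≥ m) :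
    ∀ t : ℝ, t ≥ 0 → y t ≥ m := by
  intro t ht
  have key : ∀ ε > (0:ℝ), m - ε ≤ y t := by
    intro ε hε
    have H := image_le_of_liminf_slope_right_lt_deriv_boundary'
      (f := fun _ => m - ε) (f' := fun _ => (0:ℝ)) (a := 0) (b := t)
      (B := y) (B' := fun x => derivWithin y (Set.Ici 0) x)
      continuousOn_const
      (fun x _ r hr => by
        refine Filter.Eventually.frequently ?_
        filter_upwards [Filter.univ_mem] with z _
        simpa [slope] using hr)
      (show m - ε ≤ y 0 by linarith)
      (hy.continuousOn.mono (fun x hx => hx.1))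
      (fun x hx => ((hy x (Set.mem_Ici.mpr hx.1)).hasDerivWithinAt).mono
        (Set.Ici_subset_Ici.mpr hx.1))
      ?_ (Set.right_mem_Icc.mpr ht)
    · exact H
    · intro x hx hxeq
      have hxeq : m - ε = y x := hxeq
      have hx0 : x ≠ 0 := by
        intro h
        rw [h] at hxeq
        linarith
      have hxpos : 0 < x := lt_of_le_of_ne hx.1 (Ne.symm hx0)
      have hnhds : Set.Ici (0:ℝ) ∈ nhds x := Ici_mem_nhds hxpos
      have hdiff : DifferentiableAt ℝ y x :=
        (hy x (le_of_lt hxpos)).differentiableAt hnhds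
      have heq : derivWithin y (Set.Ici 0) x = deriv y x :=
        hdiff.derivWithin (uniqueDiffWithinAt_of_mem_nhds hnhds)
      show (0:ℝ) < derivWithin y (Set.Ici 0) x
      rw [heq]
      have hbd := hderiv x (le_of_lt hxpos)
      have hlt : α (m - ε) < α m := hα_mono (by linarith)
      rw [← hxeq] at hbd
      linarith [hm]
  by_contra h
  push_neg at h
  have := key ((m - y t) / 2) (by linarith)
  linarith
end

section
/- Let E = EuclideanSpace ℝ (Fin n) and let h : E → ℝ be continuously differentiable such that 0 is a regular value of h (i.e., h(x) = 0 implies fderiv ℝ h x ≠ 0) and such that for every δ ≥ 0 the set Λ_δ = {x ∈ E | -δ ≤ h x ≤ δ} is compact. Then the level-set map c ↦ h⁻¹{c} is upper semi-continuous at 0: for every ε > 0 there exists η > 0 such that for every c ∈ ℝ with |c| < η, the level set {x ∈ E | h x = c} is contained in the open ε-thickening Metric.thickening ε {x ∈ E | h x = 0}. -/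
/-- Proposition 1: upper semi-continuity at `0` of the level-set map `c ↦ h⁻¹{c}`
for a continuously differentiable `h` with `0` a regular value and compact bands
`{-δ ≤ h ≤ δ}`. -/
theorem levelset_upper_semicontinuous
    {n : ℕ}
    (h : EuclideanSpace ℝ (Fin n) → ℝ) (hh : ContDiff ℝ 1 h)
    (hreg : ∀ x : EuclideanSpace ℝ (Fin n), h x = 0 → fderiv ℝ h x ≠ 0)
    (hcomp : ∀ δ : ℝ, δ ≥ 0 →
      IsCompact {x : EuclideanSpace ℝ (Fin n) | -δ ≤ h x ∧ h x ≤ δ}) :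
    ∀ ε : ℝ, ε > 0 → ∃ η > 0, ∀ c : ℝ, |c| < η →
      {x : EuclideanSpace ℝ (Fin n) | h x = c} ⊆
        Metric.thickening ε {x : EuclideanSpace ℝ (Fin n) | h x = 0} := by
  intro ε hε
  by_contra hcon
  push_neg at hcon
  have key : ∀ k : ℕ, ∃ x : EuclideanSpace ℝ (Fin n),
      |h x| < 1 / (k + 1) ∧
      x ∉ Metric.thickening ε {x : EuclideanSpace ℝ (Fin n) | h x = 0} := by
    intro k
    obtain ⟨c, hc, hns⟩ := hcon (1 / (k + 1)) (by positivity)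
    obtain ⟨x, hx, hxt⟩ := Set.not_subset.mp hns
    exact ⟨x, by rw [Set.mem_setOf_eq] at hx; rw [hx]; exact hc, hxt⟩
  choose x hx1 hx2 using key
  have hmem : ∀ k, x k ∈ {y : EuclideanSpace ℝ (Fin n) | -1 ≤ h y ∧ h y ≤ 1} := by
    intro k
    have h1 : |h (x k)| ≤ 1 := by
      refine le_of_lt (lt_of_lt_of_le (hx1 k) ?_)
      rw [div_le_one (by positivity)]
      have : (0 : ℝ) ≤ k := Nat.cast_nonneg k
      linarith
    have := abs_le.mp h1
    exact ⟨this.1, this.2⟩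
  obtain ⟨a, ha, φ, hφ, hlim⟩ := (hcomp 1 (by norm_num)).tendsto_subseq hmem
  have hbound : ∀ k : ℕ, |h (x (φ k))| ≤ 1 / (k + 1) := by
    intro k
    refine le_trans (le_of_lt (hx1 (φ k))) ?_
    apply one_div_le_one_div_of_le (by positivity)
    have h2 : k ≤ φ k := hφ.le_apply
    push_cast
    linarith [(Nat.cast_le (α := ℝ)).mpr h2]
  have htend0 : Filter.Tendsto (fun k => h (x (φ k))) Filter.atTop (nhds 0) := by
    have hup : Filter.Tendsto (fun k : ℕ => 1 / ((k : ℝ) + 1)) Filter.atTop (nhds 0) :=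
      tendsto_one_div_add_atTop_nhds_zero_nat
    have hdown : Filter.Tendsto (fun k : ℕ => -(1 / ((k : ℝ) + 1))) Filter.atTop (nhds 0) := by
      simpa using hup.neg
    refine tendsto_of_tendsto_of_tendsto_of_le_of_le hdown hup ?_ ?_
    · intro k; have := abs_le.mp (hbound k); linarith [this.1]
    · intro k; exact (abs_le.mp (hbound k)).2
  have htenda : Filter.Tendsto (fun k => h (x (φ k))) Filter.atTop (nhds (h a)) :=
    (hh.continuous.continuousAt.tendsto).comp hlim
  have ha0 : h a = 0 := tendsto_nhds_unique htenda htend0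
  have haT : a ∈ Metric.thickening ε {x : EuclideanSpace ℝ (Fin n) | h x = 0} :=
    Metric.self_subset_thickening hε _ ha0
  have hev := hlim.eventually (Metric.isOpen_thickening.mem_nhds haT)
  obtain ⟨k, hk⟩ := hev.exists
  exact hx2 (φ k) hk
end

section
/- Let E = EuclideanSpace ℝ (Fin n), U = EuclideanSpace ℝ (Fin m), S ⊆ E, and let F : E → ℝ, β : E → ℝ, G : E → U, and φ, r, a, b ≥ 0. Suppose F is Lipschitz on S with constant ℓF, β is Lipschitz on S with constant ℓβ, the map x ↦ φ‖G x‖² is Lipschitz on S with constant ℓφ, and G is Lipschitz on S with constant ℓG. Assume a ≥ r(ℓF + ℓβ + ℓφ) and b ≥ r·ℓG. Let x̄, x ∈ S with ‖x - x̄‖ ≤ r and let v ∈ U satisfy the robustified constraint F(x̄) + ⟪G(x̄), v⟫ - φ‖G(x̄)‖² - a - b‖v‖ ≥ -β(x̄). Then F(x) + ⟪G(x), v⟫ - φ‖G(x)‖² ≥ -β(x). -/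
open scoped InnerProductSpace NNReal

/-- Robustness-transfer step: if `v` satisfies the robustified (TR-OP) constraint
at a sampled state `xbar` and the margins `a, b` dominate the Lipschitz variation
over radius `r`, then the non-robust constraint (keeping the `φ`-margin) holds at
every `x ∈ S` within distance `r` of `xbar`. -/
theorem trop_robustness_transfer
    {n m : ℕ}
    (S : Set (EuclideanSpace ℝ (Fin n)))
    (F β : EuclideanSpace ℝ (Fin n) → ℝ)
    (G : EuclideanSpace ℝ (Fin n) → EuclideanSpace ℝ (Fin m))
    (φ r a b : ℝ) (hφ : 0 ≤ φ) (hr : 0 ≤ r) (ha0 : 0 ≤ a) (hb0 : 0 ≤ b)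
    (ℓF ℓβ ℓφ ℓG : ℝ≥0)
    (hF : LipschitzOnWith ℓF F S)
    (hβ : LipschitzOnWith ℓβ β S)
    (hφL : LipschitzOnWith ℓφ (fun x => φ * ‖G x‖ ^ 2) S)
    (hG : LipschitzOnWith ℓG G S)
    (ha : a ≥ r * ((ℓF : ℝ) + (ℓβ : ℝ) + (ℓφ : ℝ)))
    (hb : b ≥ r * (ℓG : ℝ))
    (xbar x : EuclideanSpace ℝ (Fin n)) (hxbar : xbar ∈ S) (hx : x ∈ S)
    (hdist : ‖x - xbar‖ ≤ r)
    (v : EuclideanSpace ℝ (Fin m))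
    (hcon : F xbar + ⟪G xbar, v⟫_ℝ - φ * ‖G xbar‖ ^ 2 - a - b * ‖v‖ ≥ -β xbar) :
    F x + ⟪G x, v⟫_ℝ - φ * ‖G x‖ ^ 2 ≥ -β x := by
  have hd : dist x xbar ≤ r := by rwa [dist_eq_norm]
  have hF' : |F x - F xbar| ≤ (ℓF : ℝ) * r := by
    have := hF.dist_le_mul x hx xbar hxbar
    rw [Real.dist_eq] at this
    exact this.trans (by nlinarith [ℓF.coe_nonneg])
  have hβ' : |β x - β xbar| ≤ (ℓβ : ℝ) * r := by
    have := hβ.dist_le_mul x hx xbar hxbar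
    rw [Real.dist_eq] at this
    exact this.trans (by nlinarith [ℓβ.coe_nonneg])
  have hφ' : |φ * ‖G x‖ ^ 2 - φ * ‖G xbar‖ ^ 2| ≤ (ℓφ : ℝ) * r := by
    have := hφL.dist_le_mul x hx xbar hxbar
    rw [Real.dist_eq] at this
    exact this.trans (by nlinarith [ℓφ.coe_nonneg])
  have hG' : ‖G x - G xbar‖ ≤ (ℓG : ℝ) * r := by
    have := hG.dist_le_mul x hx xbar hxbar
    rw [dist_eq_norm] at this
    exact this.trans (by nlinarith [ℓG.coe_nonneg])
  have hin : |⟪G x, v⟫_ℝ - ⟪G xbar, v⟫_ℝ| ≤ (ℓG : ℝ) * r * ‖v‖ := by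
    rw [← inner_sub_left]
    calc |⟪G x - G xbar, v⟫_ℝ| ≤ ‖G x - G xbar‖ * ‖v‖ := abs_real_inner_le_norm _ _
      _ ≤ (ℓG : ℝ) * r * ‖v‖ := by
          exact mul_le_mul_of_nonneg_right hG' (norm_nonneg _)
  have hv : 0 ≤ ‖v‖ := norm_nonneg _
  have h1 := abs_le.mp hF'
  have h2 := abs_le.mp hβ'
  have h3 := abs_le.mp hφ'
  have h4 := abs_le.mp hin
  nlinarith [hb, ha, mul_le_mul_of_nonneg_right hb hv]
end

section
/- Let E = EuclideanSpace ℝ (Fin n), U = EuclideanSpace ℝ (Fin m), Y = EuclideanSpace ℝ (Fin k). Let h : E → ℝ be continuously differentiable, f : E → E, g : E → (U →L[ℝ] E), and define the Lie derivatives L_f h(x) = (fderiv ℝ h x)(f x) and, for u ∈ U, L_g h(x)(u) = (fderiv ℝ h x)(g x u), with ‖L_g h(x)‖ the operator norm of the functional u ↦ L_g h(x)(u). Let α : ℝ → ℝ, φ > 0, r₁, r₂ > 0, r₃ = r₁ + r₂, M_e, L ≥ 0, and set S = Metric.cthickening r₃ {x | h x = 0}, assumed nonempty. Suppose on S: L_f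 h is Lipschitz with constant ℓF, α ∘ h is Lipschitz with constant ℓα, x ↦ φ‖L_g h(x)‖² is Lipschitz with constant ℓφ, the map x ↦ L_g h(x) (into the dual of U) is Lipschitz with constant ℓG, and k_θ ∘ c is Lipschitz with constant L, where c : E → Y and k_θ : Y → U. Let D ⊆ E and k_T : E → U satisfy: (i) for every p with h(p) = 0 there exists x₁ ∈ D with ‖p - x₁‖ ≤ r₁; (ii) for every x₁ ∈ D, L_f h(x₁) + L_g h(x₁)(k_T(x₁)) - φ‖L_g h(x₁)‖² - a - b‖k_T(x₁)‖ ≥ -α(h(x₁)) where a ≥ r₃(ℓF + ℓα + ℓφ) and b ≥ r₃·ℓG; (iii) for every x₁ ∈ D, ‖k_T(x₁) - k_θ(c(x₁))‖ ≤ M_e. Then for every x₃ ∈ Metric.cthickening r₂ {x | h x = 0}: L_f h(x₃) + L_g h(x₃)(k_θ(c(x₃))) ≥ -α(h(x₃)) - (1/(2φ))(L·r₃ + M_e)². -/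
open scoped NNReal

lemma young_ineq_aux (φ cc M : ℝ) (hφ : 0 < φ) :
    cc * M ≤ φ * cc ^ 2 + 1 / (2 * φ) * M ^ 2 := by
  have h2φ : (0:ℝ) < 2 * φ := by linarith
  have key : cc * M - φ * cc ^ 2 ≤ 1 / (2 * φ) * M ^ 2 := by
    rw [one_div, inv_mul_eq_div, le_div_iff₀ h2φ]
    nlinarith [sq_nonneg (2 * φ * cc - M), sq_nonneg M]
  linarith

set_option maxHeartbeats 1000000 in
/-- Pointwise barrier-derivative bound (eq. (pf_final_bound)) of the main theorem:
an expert satisfying the TR-OP constraint on a boundary-sampling dataset `D`,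
together with a Lipschitz learned controller `kθ ∘ c` that is `Me`-close to the
expert on `D`, yields an ISSf-type derivative bound for `h` at every state
within distance `r₂` of the boundary `{h = 0}`.
Here `L_f h x = (fderiv ℝ h x) (f x)` and `L_g h x = (fderiv ℝ h x).comp (g x)`. -/
theorem learned_controller_barrier_derivative_bound
    {n m k : ℕ}
    (h : EuclideanSpace ℝ (Fin n) → ℝ) (hh : ContDiff ℝ 1 h)
    (f : EuclideanSpace ℝ (Fin n) → EuclideanSpace ℝ (Fin n))
    (g : EuclideanSpace ℝ (Fin n) →
      (EuclideanSpace ℝ (Fin m) →L[ℝ] EuclideanSpace ℝ (Fin n)))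
    (α : ℝ → ℝ)
    (φ r₁ r₂ r₃ : ℝ) (hφ : 0 < φ) (hr₁ : 0 < r₁) (hr₂ : 0 < r₂)
    (hr₃ : r₃ = r₁ + r₂)
    (Me : ℝ) (hMe : 0 ≤ Me) (L : ℝ≥0)
    (S : Set (EuclideanSpace ℝ (Fin n)))
    (hS : S = Metric.cthickening r₃ {x : EuclideanSpace ℝ (Fin n) | h x = 0})
    (hSne : S.Nonempty)
    (ℓF ℓα ℓφ ℓG : ℝ≥0)
    (hF : LipschitzOnWith ℓF (fun x => (fderiv ℝ h x) (f x)) S)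
    (hαh : LipschitzOnWith ℓα (fun x => α (h x)) S)
    (hφL : LipschitzOnWith ℓφ (fun x => φ * ‖(fderiv ℝ h x).comp (g x)‖ ^ 2) S)
    (hGlip : LipschitzOnWith ℓG (fun x => (fderiv ℝ h x).comp (g x)) S)
    (c : EuclideanSpace ℝ (Fin n) → EuclideanSpace ℝ (Fin k))
    (kθ : EuclideanSpace ℝ (Fin k) → EuclideanSpace ℝ (Fin m))
    (hkθ : LipschitzOnWith L (kθ ∘ c) S)
    (D : Set (EuclideanSpace ℝ (Fin n)))
    (kT : EuclideanSpace ℝ (Fin n) → EuclideanSpace ℝ (Fin m))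
    (a b : ℝ)
    (ha : a ≥ r₃ * ((ℓF : ℝ) + (ℓα : ℝ) + (ℓφ : ℝ)))
    (hb : b ≥ r₃ * (ℓG : ℝ))
    (hdense : ∀ p : EuclideanSpace ℝ (Fin n), h p = 0 →
      ∃ x₁ ∈ D, ‖p - x₁‖ ≤ r₁)
    (hexpert : ∀ x₁ ∈ D,
      (fderiv ℝ h x₁) (f x₁) + (fderiv ℝ h x₁) (g x₁ (kT x₁))
        - φ * ‖(fderiv ℝ h x₁).comp (g x₁)‖ ^ 2 - a - b * ‖kT x₁‖
        ≥ -α (h x₁))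
    (herr : ∀ x₁ ∈ D, ‖kT x₁ - kθ (c x₁)‖ ≤ Me) :
    ∀ x₃ ∈ Metric.cthickening r₂ {x : EuclideanSpace ℝ (Fin n) | h x = 0},
      (fderiv ℝ h x₃) (f x₃) + (fderiv ℝ h x₃) (g x₃ (kθ (c x₃)))
        ≥ -α (h x₃) - (1 / (2 * φ)) * ((L : ℝ) * r₃ + Me) ^ 2 := by

  intro x₃ hx₃
  set B := {x : EuclideanSpace ℝ (Fin n) | h x = 0} with hB
  have hBne : B.Nonempty := by
    by_contra hne
    rw [Set.not_nonempty_iff_eq_empty] at hne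
    rw [hS, hne, Metric.cthickening_empty] at hSne
    exact Set.not_nonempty_empty hSne
  have hBclosed : IsClosed B := isClosed_eq hh.continuous continuous_const
  have hr₃pos : 0 < r₃ := by rw [hr₃]; linarith
  have hinf : Metric.infDist x₃ B ≤ r₂ := by
    rw [Metric.mem_cthickening_iff] at hx₃
    have := ENNReal.toReal_mono (by simp) hx₃
    rwa [ENNReal.toReal_ofReal hr₂.le] at this
  obtain ⟨p, hpB, hpd⟩ := hBclosed.exists_infDist_eq_dist hBne x₃
  have hdxp : dist x₃ p ≤ r₂ := by rw [← hpd]; exact hinf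
  obtain ⟨x₁, hx₁D, hx₁p⟩ := hdense p hpB
  have hpx₁ : dist p x₁ ≤ r₁ := by rwa [dist_eq_norm]
  have hd31 : dist x₃ x₁ ≤ r₃ := by
    calc dist x₃ x₁ ≤ dist x₃ p + dist p x₁ := dist_triangle _ _ _
      _ ≤ r₂ + r₁ := add_le_add hdxp hpx₁
      _ = r₃ := by rw [hr₃]; ring
  have hx₁S : x₁ ∈ S := by
    rw [hS]
    exact Metric.mem_cthickening_of_dist_le x₁ p r₃ _ hpB
      (by rw [dist_comm]; linarith)
  have hx₃S : x₃ ∈ S := by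
    rw [hS]
    exact Metric.mem_cthickening_of_dist_le x₃ p r₃ _ hpB (by linarith)
  -- abbreviations
  set G₁ := (fderiv ℝ h x₁).comp (g x₁) with hG₁
  set G₃ := (fderiv ℝ h x₃).comp (g x₃) with hG₃
  set u₃ := kθ (c x₃) with hu₃
  -- Lipschitz bounds
  have hLmul : ∀ {K : ℝ≥0} {F : EuclideanSpace ℝ (Fin n) → ℝ},
      LipschitzOnWith K F S → |F x₃ - F x₁| ≤ (K : ℝ) * r₃ := by
    intro K F hL
    have := hL.dist_le_mul x₃ hx₃S x₁ hx₁S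
    rw [Real.dist_eq] at this
    calc |F x₃ - F x₁| ≤ (K : ℝ) * dist x₃ x₁ := this
      _ ≤ (K : ℝ) * r₃ := by
        exact mul_le_mul_of_nonneg_left hd31 K.coe_nonneg
  have hFb := hLmul hF
  have hαb := hLmul hαh
  have hφb := hLmul hφL
  have hGb : ‖G₃ - G₁‖ ≤ (ℓG : ℝ) * r₃ := by
    have := hGlip.dist_le_mul x₃ hx₃S x₁ hx₁S
    rw [dist_eq_norm] at this
    calc ‖G₃ - G₁‖ ≤ (ℓG : ℝ) * dist x₃ x₁ := this
      _ ≤ (ℓG : ℝ) * r₃ := mul_le_mul_of_nonneg_left hd31 ℓG.coe_nonneg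
  -- controller error bound
  have hMbound : ‖u₃ - kT x₁‖ ≤ (L : ℝ) * r₃ + Me := by
    have h1 : ‖u₃ - kθ (c x₁)‖ ≤ (L : ℝ) * r₃ := by
      have := hkθ.dist_le_mul x₃ hx₃S x₁ hx₁S
      rw [dist_eq_norm] at this
      calc ‖u₃ - kθ (c x₁)‖ ≤ (L : ℝ) * dist x₃ x₁ := this
        _ ≤ (L : ℝ) * r₃ := mul_le_mul_of_nonneg_left hd31 L.coe_nonneg
    have h2 : ‖kθ (c x₁) - kT x₁‖ ≤ Me := by
      rw [norm_sub_rev]; exact herr x₁ hx₁D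
    calc ‖u₃ - kT x₁‖ ≤ ‖u₃ - kθ (c x₁)‖ + ‖kθ (c x₁) - kT x₁‖ :=
        norm_sub_le_norm_sub_add_norm_sub _ _ _
      _ ≤ (L : ℝ) * r₃ + Me := add_le_add h1 h2
  set M := (L : ℝ) * r₃ + Me with hM
  have hMnn : 0 ≤ M := by positivity
  -- rewrite applications through the composed maps
  have hrw2 : (fderiv ℝ h x₁) (g x₁ (kT x₁)) = G₁ (kT x₁) := rfl
  have hexp := hexpert x₁ hx₁D
  rw [hrw2] at hexp
  simp only [← hG₁] at hexp
  simp only [← hG₃, ← hG₁] at hφb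
  show (fderiv ℝ h x₃) (f x₃) + G₃ u₃ ≥ -α (h x₃) - 1 / (2 * φ) * M ^ 2
  clear_value G₁ G₃ u₃ M
  -- key term bounds
  have hterm1 : G₃ (u₃ - kT x₁) ≥ -(φ * ‖G₃‖ ^ 2 + 1 / (2 * φ) * M ^ 2) := by
    have h1 : |G₃ (u₃ - kT x₁)| ≤ ‖G₃‖ * M := by
      calc |G₃ (u₃ - kT x₁)| = ‖G₃ (u₃ - kT x₁)‖ := rfl
        _ ≤ ‖G₃‖ * ‖u₃ - kT x₁‖ := G₃.le_opNorm _
        _ ≤ ‖G₃‖ * M := mul_le_mul_of_nonneg_left hMbound (norm_nonneg _)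
    have h2 : ‖G₃‖ * M ≤ φ * ‖G₃‖ ^ 2 + 1 / (2 * φ) * M ^ 2 :=
      young_ineq_aux φ ‖G₃‖ M hφ
    obtain ⟨hl, -⟩ := abs_le.mp h1
    linarith
  have hterm2 : (G₃ - G₁) (kT x₁) ≥ -(b * ‖kT x₁‖) := by
    have h1 : |(G₃ - G₁) (kT x₁)| ≤ ((ℓG : ℝ) * r₃) * ‖kT x₁‖ := by
      calc |(G₃ - G₁) (kT x₁)| = ‖(G₃ - G₁) (kT x₁)‖ := rfl
        _ ≤ ‖G₃ - G₁‖ * ‖kT x₁‖ := (G₃ - G₁).le_opNorm _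
        _ ≤ ((ℓG : ℝ) * r₃) * ‖kT x₁‖ :=
          mul_le_mul_of_nonneg_right hGb (norm_nonneg _)
    have h2 : ((ℓG : ℝ) * r₃) * ‖kT x₁‖ ≤ b * ‖kT x₁‖ := by
      apply mul_le_mul_of_nonneg_right _ (norm_nonneg _)
      calc (ℓG : ℝ) * r₃ = r₃ * (ℓG : ℝ) := mul_comm _ _
        _ ≤ b := hb
    obtain ⟨hl2, -⟩ := abs_le.mp h1
    linarith
  have hsplit : G₃ u₃ = G₃ (u₃ - kT x₁) + (G₃ - G₁) (kT x₁) + G₁ (kT x₁) := by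
    simp only [map_sub, ContinuousLinearMap.sub_apply]
    ring
  have hF1 := (abs_le.mp hFb).1
  have hα1 := (abs_le.mp hαb).1
  have hφ1 := (abs_le.mp hφb).2
  have ha' : (ℓF : ℝ) * r₃ + (ℓα : ℝ) * r₃ + (ℓφ : ℝ) * r₃ ≤ a := by
    calc (ℓF : ℝ) * r₃ + (ℓα : ℝ) * r₃ + (ℓφ : ℝ) * r₃
        = r₃ * ((ℓF : ℝ) + (ℓα : ℝ) + (ℓφ : ℝ)) := by ring
      _ ≤ a := ha
  rw [hsplit]
  linarith [hterm1, hterm2, hexp, hF1, hα1, hφ1, ha']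
end

section
/- Let α : ℝ → ℝ be locally Lipschitz, strictly monotonically increasing with α(0) = 0. Let m ≤ 0 and set c = -α(m) (so c ≥ 0). Let y : ℝ → ℝ be differentiable on [0, ∞) and suppose that for every t ≥ 0 with y t ≤ 0 one has deriv y t ≥ -α (y t) - c. If y 0 ≥ m, then y t ≥ m for all t ≥ 0. -/
/-- Band-restricted ISSf comparison lemma (Nagumo-type argument): if the bound
`deriv y t ≥ -α (y t) - c` is only guaranteed where `y t ≤ 0`, with
`c = -α m` for a level `m ≤ 0`, then `{y ≥ m}` is still forward invariant. -/
theorem scalar_issf_band_comparison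
    (α : ℝ → ℝ) (hα_lip : LocallyLipschitz α) (hα_mono : StrictMono α)
    (hα_zero : α 0 = 0)
    (m : ℝ) (hm : m ≤ 0) (c : ℝ) (hc : c = -α m)
    (y : ℝ → ℝ) (hy : DifferentiableOn ℝ y (Set.Ici (0 : ℝ)))
    (hderiv : ∀ t : ℝ, t ≥ 0 → y t ≤ 0 → deriv y t ≥ -α (y t) - c)
    (hy0 : y 0 ≥ m) :
    ∀ t : ℝ, t ≥ 0 → y t ≥ m := by
  intro t₁ ht₁
  by_contra hlt
  push_neg at hlt
  have hycont : ContinuousOn y (Set.Ici (0 : ℝ)) := hy.continuousOn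
  set S : Set ℝ := Set.Icc 0 t₁ ∩ y ⁻¹' Set.Ici m with hS
  have hSclosed : IsClosed S := by
    apply (hycont.mono (Set.Icc_subset_Ici_self)).preimage_isClosed_of_isClosed
      isClosed_Icc isClosed_Ici
  have h0S : (0 : ℝ) ∈ S := ⟨⟨le_refl 0, ht₁⟩, hy0⟩
  have hSne : S.Nonempty := ⟨0, h0S⟩
  have hSbdd : BddAbove S := ⟨t₁, fun x hx => hx.1.2⟩
  set s := sSup S with hs
  have hsS : s ∈ S := hSclosed.csSup_mem hSne hSbdd
  have hs0 : 0 ≤ s := hsS.1.1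
  have hst : s ≤ t₁ := hsS.1.2
  have hys : m ≤ y s := hsS.2
  have hslt : s < t₁ := lt_of_le_of_ne hst (fun heq =>
    absurd hys (not_le.mpr (heq ▸ hlt)))
  -- On (s, t₁], y < m
  have hbelow : ∀ x ∈ Set.Ioc s t₁, y x < m := by
    intro x hx
    by_contra h
    push_neg at h
    have hxS : x ∈ S := ⟨⟨le_trans hs0 hx.1.le, hx.2⟩, h⟩
    exact absurd (le_csSup hSbdd hxS) (not_le.mpr hx.1)
  have hmono : MonotoneOn y (Set.Icc s t₁) := by
    apply monotoneOn_of_deriv_nonneg (convex_Icc s t₁)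
      (hycont.mono (fun x hx => le_trans hs0 hx.1))
    · intro x hx
      rw [interior_Icc] at hx
      have hx0 : (0 : ℝ) < x := lt_of_le_of_lt hs0 hx.1
      exact (hy.differentiableAt (Ici_mem_nhds hx0)).differentiableWithinAt
    · intro x hx
      rw [interior_Icc] at hx
      have hx0 : (0 : ℝ) ≤ x := le_of_lt (lt_of_le_of_lt hs0 hx.1)
      have hyx : y x < m := hbelow x ⟨hx.1, hx.2.le⟩
      have hd := hderiv x hx0 (le_of_lt (lt_of_lt_of_le hyx hm))
      have : α (y x) < α m := hα_mono hyx
      linarith [hd, hc.symm]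
  have := hmono ⟨le_refl s, hst⟩ ⟨hst, le_refl t₁⟩ hst
  linarith
end

section
/- Let E = EuclideanSpace ℝ (Fin n), U = EuclideanSpace ℝ (Fin m), Y = EuclideanSpace ℝ (Fin k). Let h : E → ℝ be continuously differentiable such that 0 is a regular value of h and {x | -δ ≤ h x ≤ δ} is compact for every δ ≥ 0, with {x | h x = 0} nonempty. Let α : ℝ → ℝ be locally Lipschitz, strictly monotonically increasing, surjective, with α(0) = 0. Let f : E → E, g : E → (U →L[ℝ] E), c : E → Y be locally Lipschitz, and define L_f h(x) = (fderiv ℝ h x)(f x) and L_g h(x)(u) = (fderiv ℝ h x)(g x u). Let r₁, r₂ > 0, r₃ = r₁ + r₂, M_e, L ≥ 0, S = Metric.cthickening r₃ {x | h x = 0}, and suppose on S: L_f h is Lipschitz with constant ℓF, α ∘ h is Lipschitz with constant ℓα, x ↦ ‖L_g h(x)‖² is Lipschitz with constant ℓ₂, and x ↦ L_g h(x) is Lipschitz with constant ℓG. Then there exists φ̲ ≥ 0 such that for every φ ≥ φ̲, every a ≥ r₃(ℓF + ℓα + φ·ℓ₂), every b ≥ r₃·ℓG, every dataset D ⊆ E,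 expert k_T : E → U, and learned controller k_θ : Y → U satisfying: (i) for every p with h(p) = 0 there exists x₁ ∈ D with ‖p - x₁‖ ≤ r₁; (ii) for every x₁ ∈ D, L_f h(x₁) + L_g h(x₁)(k_T(x₁)) - φ‖L_g h(x₁)‖² - a - b‖k_T(x₁)‖ ≥ -α(h(x₁)); (iii) for every x₁ ∈ D, ‖k_T(x₁) - k_θ(c(x₁))‖ ≤ M_e; (iv) k_θ ∘ c is Lipschitz on S with constant L; the following holds: for every m ∈ ℝ with α(m) = -(1/(2φ))(L·r₃ + M_e)² and every x : ℝ → E satisfying HasDerivAt x (f (x t) + g (x t) (k_θ (c (x t)))) t for all t ≥ 0 with h (x 0) ≥ 0, one has h (x t) ≥ m for all t ≥ 0. -/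
open scoped NNReal
open Filter Topology Set

/-- If a real function has a positive derivative at `s`, then arbitrarily close
to the left of `s` (but to the right of `t₀`) there are points where the value
is smaller than at `s`. -/
lemma exists_left_lt_of_hasDerivAt_pos {ψ : ℝ → ℝ} {d s t₀ : ℝ}
    (hd : HasDerivAt ψ d s) (hpos : 0 < d) (ht₀ : t₀ < s) :
    ∃ t, t₀ < t ∧ t < s ∧ ψ t < ψ s := by
  have hslope := hasDerivAt_iff_tendsto_slope.mp hd
  have h1 : ∀ᶠ t in 𝓝[<] s, 0 < slope ψ s t :=
    (hslope.mono_left (nhdsWithin_mono s (fun y hy => ne_of_lt hy))).eventually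
      (eventually_gt_nhds hpos)
  have h2 : Ioo t₀ s ∈ 𝓝[<] s := Ioo_mem_nhdsLT_of_mem ⟨ht₀, le_refl s⟩
  obtain ⟨t, hsl, ht⟩ := (h1.and (eventually_of_mem h2 (fun y hy => hy))).exists
  refine ⟨t, ht.1, ht.2, ?_⟩
  rw [slope_def_field] at hsl
  rcases div_pos_iff.mp hsl with ⟨h', h''⟩ | ⟨h', h''⟩
  · linarith [ht.2]
  · linarith


lemma cbf_young_aux {φ q cc v : ℝ} (hφ : 0 < φ)
    (hv : v = -(1 / (2 * φ)) * cc ^ 2) : v ≤ φ * q ^ 2 - q * cc := by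
  rw [hv]
  have heq : -(1 / (2 * φ)) * cc ^ 2 = -(cc ^ 2) / (2 * φ) := by ring
  rw [heq, div_le_iff₀ (by positivity)]
  nlinarith [sq_nonneg (2 * φ * q - cc), sq_nonneg cc]

lemma cbf_mul_sq_aux {φ s q0 q1 : ℝ} (hφ : 0 ≤ φ) (h : q0 ^ 2 - q1 ^ 2 ≤ s) :
    φ * q0 ^ 2 - φ * s ≤ φ * q1 ^ 2 := by nlinarith

set_option maxHeartbeats 1600000 in
/-- Main result (Theorem 2): a CBF-compliant learned end-to-end controller,
trained by imitation learning from a TR-OP expert with boundary sampling density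
`r₁`, training error `Me`, and Lipschitz constant `L`, renders the closed-loop
system `ẋ = f(x) + g(x) kθ(c(x))` input-to-state safe with respect to
`C = {h ≥ 0}`: every closed-loop solution starting in `C` stays in the expanded
set `C_δ = {x | h x ≥ m}` where `α m = -(1/(2φ))(L r₃ + Me)²`. -/
theorem cbf_compliant_imitation_learning_issf
    {n m k : ℕ}
    (h : EuclideanSpace ℝ (Fin n) → ℝ) (hh : ContDiff ℝ 1 h)
    (hreg : ∀ x : EuclideanSpace ℝ (Fin n), h x = 0 → fderiv ℝ h x ≠ 0)
    (hcomp : ∀ δ : ℝ, δ ≥ 0 →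
      IsCompact {x : EuclideanSpace ℝ (Fin n) | -δ ≤ h x ∧ h x ≤ δ})
    (hbne : {x : EuclideanSpace ℝ (Fin n) | h x = 0}.Nonempty)
    (α : ℝ → ℝ) (hα_lip : LocallyLipschitz α) (hα_mono : StrictMono α)
    (hα_surj : Function.Surjective α) (hα_zero : α 0 = 0)
    (f : EuclideanSpace ℝ (Fin n) → EuclideanSpace ℝ (Fin n))
    (g : EuclideanSpace ℝ (Fin n) →
      (EuclideanSpace ℝ (Fin m) →L[ℝ] EuclideanSpace ℝ (Fin n)))
    (c : EuclideanSpace ℝ (Fin n) → EuclideanSpace ℝ (Fin k))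
    (hf : LocallyLipschitz f) (hg : LocallyLipschitz g) (hc : LocallyLipschitz c)
    (r₁ r₂ r₃ : ℝ) (hr₁ : 0 < r₁) (hr₂ : 0 < r₂) (hr₃ : r₃ = r₁ + r₂)
    (Me : ℝ) (hMe : 0 ≤ Me) (L : ℝ≥0)
    (S : Set (EuclideanSpace ℝ (Fin n)))
    (hS : S = Metric.cthickening r₃ {x : EuclideanSpace ℝ (Fin n) | h x = 0})
    (ℓF ℓα ℓ₂ ℓG : ℝ≥0)
    (hF : LipschitzOnWith ℓF (fun x => (fderiv ℝ h x) (f x)) S)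
    (hαh : LipschitzOnWith ℓα (fun x => α (h x)) S)
    (hsq : LipschitzOnWith ℓ₂ (fun x => ‖(fderiv ℝ h x).comp (g x)‖ ^ 2) S)
    (hGlip : LipschitzOnWith ℓG (fun x => (fderiv ℝ h x).comp (g x)) S) :
    ∃ φlow : ℝ, 0 ≤ φlow ∧
      ∀ φ : ℝ, φ ≥ φlow →
      ∀ a : ℝ, a ≥ r₃ * ((ℓF : ℝ) + (ℓα : ℝ) + φ * (ℓ₂ : ℝ)) →
      ∀ b : ℝ, b ≥ r₃ * (ℓG : ℝ) →
      ∀ (D : Set (EuclideanSpace ℝ (Fin n)))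
        (kT : EuclideanSpace ℝ (Fin n) → EuclideanSpace ℝ (Fin m))
        (kθ : EuclideanSpace ℝ (Fin k) → EuclideanSpace ℝ (Fin m)),
      (∀ p : EuclideanSpace ℝ (Fin n), h p = 0 → ∃ x₁ ∈ D, ‖p - x₁‖ ≤ r₁) →
      (∀ x₁ ∈ D,
        (fderiv ℝ h x₁) (f x₁) + (fderiv ℝ h x₁) (g x₁ (kT x₁))
          - φ * ‖(fderiv ℝ h x₁).comp (g x₁)‖ ^ 2 - a - b * ‖kT x₁‖
          ≥ -α (h x₁)) →
      (∀ x₁ ∈ D, ‖kT x₁ - kθ (c x₁)‖ ≤ Me) →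
      LipschitzOnWith L (kθ ∘ c) S →
      ∀ mlvl : ℝ, α mlvl = -(1 / (2 * φ)) * ((L : ℝ) * r₃ + Me) ^ 2 →
      ∀ x : ℝ → EuclideanSpace ℝ (Fin n),
        (∀ t : ℝ, t ≥ 0 → HasDerivAt x (f (x t) + g (x t) (kθ (c (x t)))) t) →
        h (x 0) ≥ 0 →
        ∀ t : ℝ, t ≥ 0 → h (x t) ≥ mlvl := by
  set Z := {x : EuclideanSpace ℝ (Fin n) | h x = 0} with hZ
  have hr₃pos : 0 < r₃ := by rw [hr₃]; linarith
  -- Step 1: upper semicontinuity of level sets: a band `|h| ≤ δ` inside the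
  -- `r₂`-neighborhood of the zero level set.
  obtain ⟨δ, hδpos, hδ1, hδprop⟩ : ∃ δ : ℝ, 0 < δ ∧ δ ≤ 1 ∧
      ∀ y, -δ ≤ h y → h y ≤ δ → Metric.infDist y Z < r₂ := by
    have hB : IsCompact {x : EuclideanSpace ℝ (Fin n) | -1 ≤ h x ∧ h x ≤ 1} :=
      hcomp 1 (by norm_num)
    have hclosed : IsClosed {x : EuclideanSpace ℝ (Fin n) | r₂ ≤ Metric.infDist x Z} :=
      isClosed_le continuous_const (Metric.continuous_infDist_pt Z)
    set K := {x : EuclideanSpace ℝ (Fin n) | -1 ≤ h x ∧ h x ≤ 1} ∩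
      {x : EuclideanSpace ℝ (Fin n) | r₂ ≤ Metric.infDist x Z} with hK
    have hKc : IsCompact K := hB.inter_right hclosed
    rcases K.eq_empty_or_nonempty with hKe | hKne
    · refine ⟨1, one_pos, le_rfl, fun y h1 h2 => ?_⟩
      by_contra hcon; push_neg at hcon
      have hmem : y ∈ K := ⟨⟨h1, h2⟩, hcon⟩
      rw [hKe] at hmem; exact hmem
    · obtain ⟨z, hzK, hz⟩ := hKc.exists_isMinOn hKne
        ((continuous_abs.comp hh.continuous).continuousOn)
      have hz0 : 0 < |h z| := by
        rw [abs_pos]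
        intro heq
        have hzZ : z ∈ Z := heq
        have : Metric.infDist z Z = 0 := Metric.infDist_zero_of_mem hzZ
        have := hzK.2
        rw [Set.mem_setOf_eq] at this
        linarith
      refine ⟨min (|h z| / 2) 1, by positivity, min_le_right _ _, fun y h1 h2 => ?_⟩
      by_contra hcon; push_neg at hcon
      have hmin1 : min (|h z| / 2) 1 ≤ 1 := min_le_right _ _
      have hyK : y ∈ K := ⟨⟨by linarith, by linarith⟩, hcon⟩
      have hmz : |h z| ≤ |h y| := isMinOn_iff.mp hz y hyK
      have hya : |h y| ≤ min (|h z| / 2) 1 := abs_le.mpr ⟨h1, h2⟩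
      have := min_le_left (|h z| / 2) 1
      linarith
  -- Step 2: the lower threshold for φ.
  set cc : ℝ := (L : ℝ) * r₃ + Me with hcc
  have hccnn : 0 ≤ cc := by
    have : (0 : ℝ) ≤ (L : ℝ) * r₃ := mul_nonneg L.coe_nonneg hr₃pos.le
    linarith
  have hA : 0 < -α (-δ / 2) := by
    have := hα_mono (show -δ / 2 < 0 by linarith)
    rw [hα_zero] at this
    linarith
  refine ⟨max 1 (cc ^ 2 / (2 * (-α (-δ / 2)))),
    le_trans zero_le_one (le_max_left _ _), ?_⟩
  intro φ hφ a ha b hb D kT kθ hdense hexpert herr hLip mlvl hmlvl x hx hx0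
  have hφ1 : (1 : ℝ) ≤ φ := le_trans (le_max_left _ _) hφ
  have hφpos : 0 < φ := lt_of_lt_of_le one_pos hφ1
  have hφ2 : cc ^ 2 / (2 * (-α (-δ / 2))) ≤ φ := le_trans (le_max_right _ _) hφ
  have hcsq : cc ^ 2 ≤ φ * (2 * (-α (-δ / 2))) := (div_le_iff₀ (by positivity)).mp hφ2
  -- Bounds on mlvl.
  have hml2 : -δ / 2 ≤ mlvl := by
    by_contra hcon; push_neg at hcon
    have hlt := hα_mono hcon
    rw [hmlvl] at hlt
    have h2 : (1 / (2 * φ)) * cc ^ 2 ≤ -α (-δ / 2) := by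
      rw [div_mul_eq_mul_div, one_mul, div_le_iff₀ (by positivity)]
      nlinarith
    linarith
  have hml0 : mlvl ≤ 0 := by
    by_contra hcon; push_neg at hcon
    have hlt := hα_mono hcon
    rw [hα_zero, hmlvl] at hlt
    have hinv : 0 < 1 / (2 * φ) := by positivity
    nlinarith [sq_nonneg cc]
  -- Step 3: the pointwise CBF inequality in the band `-δ ≤ h ≤ 0`.
  have key : ∀ x₀ : EuclideanSpace ℝ (Fin n), -δ ≤ h x₀ → h x₀ ≤ 0 →
      α mlvl - α (h x₀) ≤
        (fderiv ℝ h x₀) (f x₀) + (fderiv ℝ h x₀) (g x₀ (kθ (c x₀))) := by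
    intro x₀ hlo hhi
    have hin : Metric.infDist x₀ Z < r₂ := hδprop x₀ hlo (le_trans hhi hδpos.le)
    obtain ⟨p, hpZ, hpd⟩ := (Metric.infDist_lt_iff hbne).mp hin
    obtain ⟨x₁, hx₁D, hx₁p⟩ := hdense p hpZ
    have hd01 : dist x₀ x₁ ≤ r₃ := by
      calc dist x₀ x₁ ≤ dist x₀ p + dist p x₁ := dist_triangle _ _ _
        _ ≤ r₂ + r₁ := by
          rw [dist_eq_norm]
          exact add_le_add hpd.le hx₁p
        _ = r₃ := by rw [hr₃]; ring
    have hx₀S : x₀ ∈ S := by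
      rw [hS]
      exact Metric.mem_cthickening_of_dist_le x₀ p r₃ _ hpZ (by linarith [hpd.le])
    have hx₁S : x₁ ∈ S := by
      rw [hS]
      refine Metric.mem_cthickening_of_dist_le x₁ p r₃ _ hpZ ?_
      rw [dist_comm, dist_eq_norm]
      linarith
    set G : EuclideanSpace ℝ (Fin n) →
        (EuclideanSpace ℝ (Fin m) →L[ℝ] ℝ) :=
      fun y => (fderiv ℝ h y).comp (g y) with hGdef
    -- Lipschitz transfer estimates.
    have eF : |(fderiv ℝ h x₀) (f x₀) - (fderiv ℝ h x₁) (f x₁)| ≤ (ℓF : ℝ) * r₃ := by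
      have hd := (lipschitzOnWith_iff_dist_le_mul.mp hF) x₀ hx₀S x₁ hx₁S
      rw [Real.dist_eq] at hd
      exact hd.trans (mul_le_mul_of_nonneg_left hd01 ℓF.coe_nonneg)
    have eα : |α (h x₀) - α (h x₁)| ≤ (ℓα : ℝ) * r₃ := by
      have hd := (lipschitzOnWith_iff_dist_le_mul.mp hαh) x₀ hx₀S x₁ hx₁S
      rw [Real.dist_eq] at hd
      exact hd.trans (mul_le_mul_of_nonneg_left hd01 ℓα.coe_nonneg)
    have esq : |‖G x₀‖ ^ 2 - ‖G x₁‖ ^ 2| ≤ (ℓ₂ : ℝ) * r₃ := by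
      have hd := (lipschitzOnWith_iff_dist_le_mul.mp hsq) x₀ hx₀S x₁ hx₁S
      rw [Real.dist_eq] at hd
      exact hd.trans (mul_le_mul_of_nonneg_left hd01 ℓ₂.coe_nonneg)
    have eG : ‖G x₀ - G x₁‖ ≤ (ℓG : ℝ) * r₃ := by
      have hd := (lipschitzOnWith_iff_dist_le_mul.mp hGlip) x₀ hx₀S x₁ hx₁S
      rw [dist_eq_norm] at hd
      exact hd.trans (mul_le_mul_of_nonneg_left hd01 ℓG.coe_nonneg)
    have ekθ : ‖kθ (c x₀) - kθ (c x₁)‖ ≤ (L : ℝ) * r₃ := by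
      have hd := (lipschitzOnWith_iff_dist_le_mul.mp hLip) x₀ hx₀S x₁ hx₁S
      rw [dist_eq_norm] at hd
      exact hd.trans (mul_le_mul_of_nonneg_left hd01 L.coe_nonneg)
    have hnorm1 : ‖kθ (c x₀) - kT x₁‖ ≤ cc := by
      have htr := dist_triangle (kθ (c x₀)) (kθ (c x₁)) (kT x₁)
      rw [dist_eq_norm, dist_eq_norm, dist_eq_norm] at htr
      have h2 : ‖kθ (c x₁) - kT x₁‖ ≤ Me := by
        rw [norm_sub_rev]; exact herr x₁ hx₁D
      rw [hcc]
      linarith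
    -- Decompose the cross term.
    have e1 : G x₀ (kθ (c x₀)) - G x₁ (kT x₁) =
        (G x₀) (kθ (c x₀) - kT x₁) + (G x₀ - G x₁) (kT x₁) := by
      simp only [map_sub, ContinuousLinearMap.sub_apply]
      ring
    have t1 : |(G x₀) (kθ (c x₀) - kT x₁)| ≤ ‖G x₀‖ * cc := by
      calc |(G x₀) (kθ (c x₀) - kT x₁)| = ‖(G x₀) (kθ (c x₀) - kT x₁)‖ :=
            (Real.norm_eq_abs _).symm
        _ ≤ ‖G x₀‖ * ‖kθ (c x₀) - kT x₁‖ := (G x₀).le_opNorm _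
        _ ≤ ‖G x₀‖ * cc := mul_le_mul_of_nonneg_left hnorm1 (norm_nonneg _)
    have t2 : |(G x₀ - G x₁) (kT x₁)| ≤ ((ℓG : ℝ) * r₃) * ‖kT x₁‖ := by
      calc |(G x₀ - G x₁) (kT x₁)| = ‖(G x₀ - G x₁) (kT x₁)‖ :=
            (Real.norm_eq_abs _).symm
        _ ≤ ‖G x₀ - G x₁‖ * ‖kT x₁‖ := (G x₀ - G x₁).le_opNorm _
        _ ≤ ((ℓG : ℝ) * r₃) * ‖kT x₁‖ :=
            mul_le_mul_of_nonneg_right eG (norm_nonneg _)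
    -- The expert inequality at the dataset point.
    have hexp := hexpert x₁ hx₁D
    have hexp' : (fderiv ℝ h x₁) (f x₁) + G x₁ (kT x₁)
        - φ * ‖G x₁‖ ^ 2 - a - b * ‖kT x₁‖ ≥ -α (h x₁) := hexp
    -- Young's inequality / completing the square.
    have young : α mlvl ≤ φ * ‖G x₀‖ ^ 2 - ‖G x₀‖ * cc :=
      cbf_young_aux hφpos hmlvl
    -- Assemble.
    have ha' : (ℓF : ℝ) * r₃ + (ℓα : ℝ) * r₃ + φ * ((ℓ₂ : ℝ) * r₃) ≤ a := by
      have hring : r₃ * ((ℓF : ℝ) + (ℓα : ℝ) + φ * (ℓ₂ : ℝ)) =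
          (ℓF : ℝ) * r₃ + (ℓα : ℝ) * r₃ + φ * ((ℓ₂ : ℝ) * r₃) := by ring
      linarith [ha, hring.ge, hring.le]
    have hb' : ((ℓG : ℝ) * r₃) * ‖kT x₁‖ ≤ b * ‖kT x₁‖ := by
      refine mul_le_mul_of_nonneg_right ?_ (norm_nonneg _)
      rw [mul_comm]; exact hb
    have eφq : φ * ‖G x₀‖ ^ 2 - φ * ((ℓ₂ : ℝ) * r₃) ≤ φ * ‖G x₁‖ ^ 2 :=
      cbf_mul_sq_aux hφpos.le (abs_le.mp esq).2
    have eF' := abs_le.mp eF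
    have eα' := abs_le.mp eα
    have t1' := abs_le.mp t1
    have t2' := abs_le.mp t2
    have hbridge : (G x₀) (kθ (c x₀)) = (fderiv ℝ h x₀) (g x₀ (kθ (c x₀))) := rfl
    linarith [e1.ge, e1.le, hbridge.le, hbridge.ge, eF'.1, eα'.2, t1'.1, t2'.1]
  -- Step 4: the trajectory argument.
  by_contra hcon
  push_neg at hcon
  obtain ⟨t₁, ht₁0, ht₁⟩ := hcon
  have hψd : ∀ t : ℝ, 0 ≤ t → HasDerivAt (fun τ => h (x τ))
      ((fderiv ℝ h (x t)) (f (x t) + g (x t) (kθ (c (x t))))) t := fun t ht =>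
    ((hh.differentiable one_ne_zero (x t)).hasFDerivAt).comp_hasDerivAt t (hx t ht)
  have hψc : ContinuousOn (fun τ => h (x τ)) (Set.Icc 0 t₁) := fun t ht =>
    ((hψd t ht.1).continuousAt).continuousWithinAt
  set μ := max (-δ) ((h (x t₁) + mlvl) / 2) with hμdef
  have hμlt : μ < mlvl := max_lt (by linarith) (by linarith)
  have hμ0 : μ < 0 := lt_of_lt_of_le hμlt hml0
  have hμδ : -δ ≤ μ := le_max_left _ _
  have hψt₁μ : h (x t₁) ≤ μ :=
    le_trans (by linarith : h (x t₁) ≤ (h (x t₁) + mlvl) / 2) (le_max_right _ _)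
  have hμψ0 : μ ≤ h (x 0) := le_trans hμ0.le hx0
  obtain ⟨s', hs'I, hs'⟩ := intermediate_value_Icc' ht₁0 hψc ⟨hψt₁μ, hμψ0⟩
  set T := Set.Icc (0 : ℝ) t₁ ∩ (fun τ => h (x τ)) ⁻¹' {μ} with hTdef
  have hTne : T.Nonempty := ⟨s', hs'I, hs'⟩
  have hTcl : IsClosed T :=
    hψc.preimage_isClosed_of_isClosed isClosed_Icc isClosed_singleton
  have hTcomp : IsCompact T := isCompact_Icc.of_isClosed_subset hTcl
    Set.inter_subset_left
  set s := sInf T with hsdef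
  have hsT : s ∈ T := hTcomp.sInf_mem hTne
  have hs01 : s ∈ Set.Icc (0 : ℝ) t₁ := hsT.1
  have hψs : h (x s) = μ := hsT.2
  have hs0 : 0 < s := by
    rcases lt_or_eq_of_le hs01.1 with h' | h'
    · exact h'
    · exfalso; rw [← h'] at hψs; linarith
  have hbefore : ∀ t, 0 ≤ t → t < s → μ < h (x t) := by
    intro t ht hts
    by_contra hcon2; push_neg at hcon2
    have hcsub : ContinuousOn (fun τ => h (x τ)) (Set.Icc 0 t) :=
      hψc.mono (Set.Icc_subset_Icc le_rfl (by linarith [hs01.2]))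
    obtain ⟨t', ht'I, ht'⟩ := intermediate_value_Icc' ht hcsub ⟨hcon2, hμψ0⟩
    have ht'T : t' ∈ T := ⟨⟨ht'I.1, by linarith [ht'I.2, hs01.2]⟩, ht'⟩
    have := csInf_le hTcomp.bddBelow ht'T
    linarith [ht'I.2]
  have hDpos : 0 <
      (fderiv ℝ h (x s)) (f (x s) + g (x s) (kθ (c (x s)))) := by
    have hk := key (x s) (by rw [hψs]; exact hμδ) (by rw [hψs]; exact hμ0.le)
    have hmono := hα_mono hμlt
    have hadd : (fderiv ℝ h (x s)) (f (x s) + g (x s) (kθ (c (x s)))) =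
        (fderiv ℝ h (x s)) (f (x s)) +
        (fderiv ℝ h (x s)) (g (x s) (kθ (c (x s)))) := map_add _ _ _
    rw [hψs] at hk
    rw [hadd]
    linarith
  obtain ⟨t, ht0, hts, hlt⟩ :=
    exists_left_lt_of_hasDerivAt_pos (hψd s hs0.le) hDpos hs0
  have := hbefore t ht0.le hts
  rw [hψs] at hlt
  linarith
end

section
/- Let E = EuclideanSpace ℝ (Fin n), U = EuclideanSpace ℝ (Fin m), Y = EuclideanSpace ℝ (Fin k). Let h : E → ℝ be continuously differentiable such that 0 is a regular value of h and {x | -δ ≤ h x ≤ δ} is compact for every δ ≥ 0, with {x | h x = 0} nonempty. Let α : ℝ → ℝ be locally Lipschitz, strictly monotonically increasing, surjective, with α(0) = 0. Let f : E → E, g : E → (U →L[ℝ] E), c : E → Y be locally Lipschitz, and define L_f h(x) = (fderiv ℝ h x)(f x) and L_g h(x)(u) = (fderiv ℝ h x)(g x u). Let r₁, r₂ > 0, r₃ = r₁ + r₂, M_e, L ≥ 0, S = Metric.cthickening r₃ {x | h x = 0}, and suppose on S: L_f h is Lipschitz with constant ℓF, α ∘ h is Lipschitz with constant ℓα, x ↦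 ‖L_g h(x)‖² is Lipschitz with constant ℓ₂, and x ↦ L_g h(x) is Lipschitz with constant ℓG. Then there exists φ̲ ≥ 0 such that for every φ ≥ φ̲, every a ≥ r₃(ℓF + ℓα + φ·ℓ₂), every b ≥ r₃·ℓG, every dataset D ⊆ E, expert k_T : E → U, and learned controller k_θ : Y → U satisfying: (i) for every p with h(p) ≥ 0 there exists x₁ ∈ D with ‖p - x₁‖ ≤ r₁; (ii) for every x₁ ∈ D, L_f h(x₁) + L_g h(x₁)(k_T(x₁)) - φ‖L_g h(x₁)‖² - a - b‖k_T(x₁)‖ ≥ -α(h(x₁)); (iii) for every x₁ ∈ D, ‖k_T(x₁) - k_θ(c(x₁))‖ ≤ M_e; (iv) k_θ ∘ c is Lipschitz on S with constant L; the following holds: for every m ∈ ℝ with α(m) = -(1/(2φ))(L·r₃ + M_e)² and every x : ℝ → E satisfying HasDerivAt x (f (x t) + g (x t) (k_θ (c (x t)))) t for all t ≥ 0 with h (x 0) ≥ 0, one has h (x t) ≥ m for all t ≥ 0. -/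
open scoped NNReal


private lemma aux_young (φ gp A : ℝ) (hφ : 0 < φ) :
    -(A ^ 2 / (4 * φ)) ≤ φ * gp ^ 2 - gp * A := by
  have h4φ : (0 : ℝ) < 4 * φ := by linarith
  have h1 : gp * A - φ * gp ^ 2 ≤ A ^ 2 / (4 * φ) := by
    rw [le_div_iff₀ h4φ]
    nlinarith [sq_nonneg (2 * φ * gp - A)]
  linarith

private lemma aux_e10 (φ A : ℝ) (hφ : 1 ≤ φ) :
    -(1 / (2 * φ)) * A ^ 2 ≤ -(A ^ 2 / (4 * φ)) := by
  have hφ0 : (0 : ℝ) < φ := by linarith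
  have heq : -(1 / (2 * φ)) * A ^ 2 = -(A ^ 2 / (2 * φ)) := by ring
  rw [heq]
  have h1 : A ^ 2 / (4 * φ) ≤ A ^ 2 / (2 * φ) := by
    rw [div_le_div_iff₀ (by linarith) (by linarith)]
    nlinarith [sq_nonneg A]
  linarith

private lemma aux_combine
    (φ a b r₃ d lF la l2 lG A nT : ℝ)
    (Fp F₁ αp α₁ gp g₁ Gpθ G₁T mα : ℝ)
    (hφ1 : 1 ≤ φ) (hd : d ≤ r₃) (hd0 : 0 ≤ d)
    (hlF : 0 ≤ lF) (hla : 0 ≤ la) (hl2 : 0 ≤ l2) (hlG : 0 ≤ lG) (hnT : 0 ≤ nT)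
    (ha : a ≥ r₃ * (lF + la + φ * l2))
    (hb : b ≥ r₃ * lG)
    (e1a : -(lF * d) ≤ Fp - F₁)
    (e2a : -(la * d) ≤ αp - α₁)
    (e3b : gp ^ 2 - g₁ ^ 2 ≤ l2 * d)
    (e5 : F₁ + G₁T - φ * g₁ ^ 2 - a - b * nT ≥ -α₁)
    (e6 : G₁T - lG * d * nT - gp * A ≤ Gpθ)
    (e9 : -(A ^ 2 / (4 * φ)) ≤ φ * gp ^ 2 - gp * A)
    (e10 : mα ≤ -(A ^ 2 / (4 * φ))) :
    mα - αp ≤ Fp + Gpθ := by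
  have hφ0 : (0 : ℝ) ≤ φ := by linarith
  have m1 : φ * (gp ^ 2 - g₁ ^ 2) ≤ φ * (l2 * d) := mul_le_mul_of_nonneg_left e3b hφ0
  have m2 : φ * (l2 * d) ≤ φ * (l2 * r₃) :=
    mul_le_mul_of_nonneg_left (mul_le_mul_of_nonneg_left hd hl2) hφ0
  have m3' : lG * d ≤ b := le_trans (mul_le_mul_of_nonneg_left hd hlG) (by linarith)
  have m3 : lG * d * nT ≤ b * nT := mul_le_mul_of_nonneg_right m3' hnT
  have m4 : la * d ≤ la * r₃ := mul_le_mul_of_nonneg_left hd hla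
  have m5 : lF * d ≤ lF * r₃ := mul_le_mul_of_nonneg_left hd hlF
  nlinarith [m1, m2, m3, m4, m5]

set_option maxHeartbeats 2000000 in
/-- Corollary 1: the conclusion of the main theorem still holds when the
`r₁`-density sampling condition on the dataset `D` is imposed over the entire
safe set `C = {h ≥ 0}` rather than just its boundary `{h = 0}`: every closed-loop
solution of `ẋ = f(x) + g(x) kθ(c(x))` starting in `C` stays in the expanded set
`C_δ = {x | h x ≥ m}` where `α m = -(1/(2φ))(L r₃ + Me)²`. -/
theorem cbf_compliant_imitation_learning_issf_dense_sampling
    {n m k : ℕ}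
    (h : EuclideanSpace ℝ (Fin n) → ℝ) (hh : ContDiff ℝ 1 h)
    (hreg : ∀ x : EuclideanSpace ℝ (Fin n), h x = 0 → fderiv ℝ h x ≠ 0)
    (hcomp : ∀ δ : ℝ, δ ≥ 0 →
      IsCompact {x : EuclideanSpace ℝ (Fin n) | -δ ≤ h x ∧ h x ≤ δ})
    (hbne : {x : EuclideanSpace ℝ (Fin n) | h x = 0}.Nonempty)
    (α : ℝ → ℝ) (hα_lip : LocallyLipschitz α) (hα_mono : StrictMono α)
    (hα_surj : Function.Surjective α) (hα_zero : α 0 = 0)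
    (f : EuclideanSpace ℝ (Fin n) → EuclideanSpace ℝ (Fin n))
    (g : EuclideanSpace ℝ (Fin n) →
      (EuclideanSpace ℝ (Fin m) →L[ℝ] EuclideanSpace ℝ (Fin n)))
    (c : EuclideanSpace ℝ (Fin n) → EuclideanSpace ℝ (Fin k))
    (hf : LocallyLipschitz f) (hg : LocallyLipschitz g) (hc : LocallyLipschitz c)
    (r₁ r₂ r₃ : ℝ) (hr₁ : 0 < r₁) (hr₂ : 0 < r₂) (hr₃ : r₃ = r₁ + r₂)
    (Me : ℝ) (hMe : 0 ≤ Me) (L : ℝ≥0)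
    (S : Set (EuclideanSpace ℝ (Fin n)))
    (hS : S = Metric.cthickening r₃ {x : EuclideanSpace ℝ (Fin n) | h x = 0})
    (ℓF ℓα ℓ₂ ℓG : ℝ≥0)
    (hF : LipschitzOnWith ℓF (fun x => (fderiv ℝ h x) (f x)) S)
    (hαh : LipschitzOnWith ℓα (fun x => α (h x)) S)
    (hsq : LipschitzOnWith ℓ₂ (fun x => ‖(fderiv ℝ h x).comp (g x)‖ ^ 2) S)
    (hGlip : LipschitzOnWith ℓG (fun x => (fderiv ℝ h x).comp (g x)) S) :
    ∃ φlow : ℝ, 0 ≤ φlow ∧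
      ∀ φ : ℝ, φ ≥ φlow →
      ∀ a : ℝ, a ≥ r₃ * ((ℓF : ℝ) + (ℓα : ℝ) + φ * (ℓ₂ : ℝ)) →
      ∀ b : ℝ, b ≥ r₃ * (ℓG : ℝ) →
      ∀ (D : Set (EuclideanSpace ℝ (Fin n)))
        (kT : EuclideanSpace ℝ (Fin n) → EuclideanSpace ℝ (Fin m))
        (kθ : EuclideanSpace ℝ (Fin k) → EuclideanSpace ℝ (Fin m)),
      (∀ p : EuclideanSpace ℝ (Fin n), h p ≥ 0 → ∃ x₁ ∈ D, ‖p - x₁‖ ≤ r₁) →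
      (∀ x₁ ∈ D,
        (fderiv ℝ h x₁) (f x₁) + (fderiv ℝ h x₁) (g x₁ (kT x₁))
          - φ * ‖(fderiv ℝ h x₁).comp (g x₁)‖ ^ 2 - a - b * ‖kT x₁‖
          ≥ -α (h x₁)) →
      (∀ x₁ ∈ D, ‖kT x₁ - kθ (c x₁)‖ ≤ Me) →
      LipschitzOnWith L (kθ ∘ c) S →
      ∀ mlvl : ℝ, α mlvl = -(1 / (2 * φ)) * ((L : ℝ) * r₃ + Me) ^ 2 →
      ∀ x : ℝ → EuclideanSpace ℝ (Fin n),
        (∀ t : ℝ, t ≥ 0 → HasDerivAt x (f (x t) + g (x t) (kθ (c (x t)))) t) →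
        h (x 0) ≥ 0 →
        ∀ t : ℝ, t ≥ 0 → h (x t) ≥ mlvl := by
  classical
  have hhc : Continuous h := hh.continuous
  set B : Set (EuclideanSpace ℝ (Fin n)) := {x | h x = 0} with hBdef
  -- Step 1: find δ₀ > 0 such that points with -δ₀ ≤ h ≤ 0 are within distance r₂ of B
  obtain ⟨δ₀, hδ₀pos, hδ₀⟩ :
      ∃ δ₀ : ℝ, 0 < δ₀ ∧ ∀ p, -δ₀ ≤ h p → h p ≤ 0 → Metric.infDist p B < r₂ := by
    set F : Set (EuclideanSpace ℝ (Fin n)) :=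
      {p | -1 ≤ h p ∧ h p ≤ 0 ∧ r₂ ≤ Metric.infDist p B} with hFdef
    have hFclosed : IsClosed F := by
      have h1 : IsClosed {p : EuclideanSpace ℝ (Fin n) | -1 ≤ h p} :=
        isClosed_le continuous_const hhc
      have h2 : IsClosed {p : EuclideanSpace ℝ (Fin n) | h p ≤ 0} :=
        isClosed_le hhc continuous_const
      have h3 : IsClosed {p : EuclideanSpace ℝ (Fin n) | r₂ ≤ Metric.infDist p B} :=
        isClosed_le continuous_const (Metric.continuous_infDist_pt B)
      exact h1.inter (h2.inter h3)
    have hFcompact : IsCompact F := by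
      refine (hcomp 1 (by norm_num)).of_isClosed_subset hFclosed ?_
      intro p hp
      exact ⟨hp.1, hp.2.1.trans (by norm_num)⟩
    by_cases hFne : F.Nonempty
    · obtain ⟨p₀, hp₀F, hmax⟩ := hFcompact.exists_isMaxOn hFne hhc.continuousOn
      have hM : h p₀ < 0 := by
        rcases lt_or_eq_of_le hp₀F.2.1 with h' | h'
        · exact h'
        · exfalso
          have : Metric.infDist p₀ B = 0 := Metric.infDist_zero_of_mem h'
          have := hp₀F.2.2
          linarith
      have hminpos : 0 < min 1 (-h p₀) := lt_min one_pos (by linarith)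
      refine ⟨min 1 (-h p₀) / 2, by linarith, ?_⟩
      intro p h1 h2
      by_contra hcon
      push_neg at hcon
      have hmin1 : min 1 (-h p₀) ≤ 1 := min_le_left _ _
      have hmin2 : min 1 (-h p₀) ≤ -h p₀ := min_le_right _ _
      have hpF : p ∈ F := ⟨by linarith, h2, hcon⟩
      have := hmax hpF
      simp only [Set.mem_setOf_eq] at this
      have hmin3 : 0 < min 1 (-h p₀) := lt_min one_pos (by linarith)
      linarith
    · refine ⟨1, one_pos, ?_⟩
      intro p h1 h2
      by_contra hcon
      push_neg at hcon
      exact hFne ⟨p, h1, h2, hcon⟩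
  -- constants
  set A : ℝ := (L : ℝ) * r₃ + Me with hAdef
  have hr₃pos : 0 < r₃ := by rw [hr₃]; linarith
  have hA0 : 0 ≤ A := add_nonneg (mul_nonneg L.coe_nonneg hr₃pos.le) hMe
  have hc₀ : α (-(δ₀ / 2)) < 0 := by
    rw [← hα_zero]; exact hα_mono (by linarith)
  set c₀ : ℝ := -α (-(δ₀ / 2)) with hc₀def
  have hc₀pos : 0 < c₀ := by simp only [hc₀def]; linarith
  refine ⟨max 1 (A ^ 2 / (2 * c₀)), le_trans zero_le_one (le_max_left _ _), ?_⟩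
  intro φ hφ a ha b hb D kT kθ hdense hcbf herr hLlip mlvl hm x hx hx0
  have hφ1 : (1 : ℝ) ≤ φ := le_trans (le_max_left _ _) hφ
  have hφpos : (0 : ℝ) < φ := lt_of_lt_of_le one_pos hφ1
  -- mlvl ≤ 0 and mlvl ≥ -(δ₀/2)
  have hm0 : mlvl ≤ 0 := by
    have h1 : 0 ≤ 1 / (2 * φ) * A ^ 2 := by positivity
    have h2 : α mlvl ≤ α 0 := by rw [hα_zero, hm]; linarith
    exact hα_mono.le_iff_le.mp h2
  have hmδ : -(δ₀ / 2) ≤ mlvl := by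
    have h2 : A ^ 2 / (2 * c₀) ≤ φ := le_trans (le_max_right _ _) hφ
    have h1 : A ^ 2 ≤ 2 * c₀ * φ := by
      have := mul_le_mul_of_nonneg_right h2 (by linarith : (0:ℝ) ≤ 2 * c₀)
      calc A ^ 2 = A ^ 2 / (2 * c₀) * (2 * c₀) := by field_simp
        _ ≤ φ * (2 * c₀) := this
        _ = 2 * c₀ * φ := by ring
    have h3 : 1 / (2 * φ) * A ^ 2 ≤ c₀ := by
      rw [div_mul_eq_mul_div, one_mul, div_le_iff₀ (by linarith : (0:ℝ) < 2 * φ)]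
      linarith
    have h4 : α (-(δ₀ / 2)) ≤ α mlvl := by
      rw [hm]; simp only [hc₀def] at h3; linarith
    exact hα_mono.le_iff_le.mp h4
  -- Key derivative inequality
  have key : ∀ p : EuclideanSpace ℝ (Fin n), -δ₀ ≤ h p → h p ≤ 0 →
      α mlvl - α (h p) ≤ fderiv ℝ h p (f p + g p (kθ (c p))) := by
    intro p hp1 hp2
    obtain ⟨q, hqB, hpq⟩ := (Metric.infDist_lt_iff hbne).mp (hδ₀ p hp1 hp2)
    have hq0 : h q = 0 := hqB
    obtain ⟨x₁, hx₁D, hqx₁⟩ := hdense q (le_of_eq hq0.symm)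
    have hqx₁d : dist q x₁ ≤ r₁ := by rw [dist_eq_norm]; exact hqx₁
    have hd : dist p x₁ ≤ r₃ := by
      have h1 := dist_triangle p q x₁
      rw [hr₃]; linarith
    set d := dist p x₁ with hddef
    have hd0 : 0 ≤ d := dist_nonneg
    have hpS : p ∈ S := by
      rw [hS]
      exact Metric.mem_cthickening_of_dist_le p q r₃ _ hqB (by rw [hr₃]; linarith)
    have hx₁S : x₁ ∈ S := by
      rw [hS]
      exact Metric.mem_cthickening_of_dist_le x₁ q r₃ _ hqB
        (by rw [dist_comm, hr₃]; linarith)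
    set Gp := (fderiv ℝ h p).comp (g p) with hGp
    set G₁ := (fderiv ℝ h x₁).comp (g x₁) with hG₁
    set T := kT x₁ with hT
    have e1 := hF.dist_le_mul p hpS x₁ hx₁S
    rw [Real.dist_eq] at e1
    obtain ⟨e1a, e1b⟩ := abs_le.mp e1
    have e2 := hαh.dist_le_mul p hpS x₁ hx₁S
    rw [Real.dist_eq] at e2
    obtain ⟨e2a, e2b⟩ := abs_le.mp e2
    have e3 := hsq.dist_le_mul p hpS x₁ hx₁S
    rw [Real.dist_eq] at e3
    obtain ⟨e3a, e3b⟩ := abs_le.mp e3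
    have e4 : ‖Gp - G₁‖ ≤ (ℓG : ℝ) * d := by
      have := hGlip.dist_le_mul p hpS x₁ hx₁S
      rwa [dist_eq_norm] at this
    have e5 : fderiv ℝ h x₁ (f x₁) + G₁ T - φ * ‖G₁‖ ^ 2 - a - b * ‖T‖ ≥ -α (h x₁) :=
      hcbf x₁ hx₁D
    have eθ : ‖kθ (c p) - T‖ ≤ (L : ℝ) * d + Me := by
      have h1 := hLlip.dist_le_mul p hpS x₁ hx₁S
      rw [Function.comp_apply, Function.comp_apply, dist_eq_norm] at h1
      have h2 := herr x₁ hx₁D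
      rw [← norm_neg (kT x₁ - kθ (c x₁))] at h2
      simp only [neg_sub] at h2
      calc ‖kθ (c p) - T‖ ≤ ‖kθ (c p) - kθ (c x₁)‖ + ‖kθ (c x₁) - T‖ := by
            have := dist_triangle (kθ (c p)) (kθ (c x₁)) T
            simpa [dist_eq_norm] using this
        _ ≤ (L : ℝ) * d + Me := by exact add_le_add h1 h2
    have e6 : G₁ T - (ℓG : ℝ) * d * ‖T‖ - ‖Gp‖ * A ≤ Gp (kθ (c p)) := by
      have hsplit : Gp (kθ (c p)) = G₁ T + (Gp - G₁) T + Gp (kθ (c p) - T) := by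
        simp only [ContinuousLinearMap.sub_apply, map_sub]
        ring
      have h2 : |(Gp - G₁) T| ≤ (ℓG : ℝ) * d * ‖T‖ := by
        calc |(Gp - G₁) T| = ‖(Gp - G₁) T‖ := (Real.norm_eq_abs _).symm
          _ ≤ ‖Gp - G₁‖ * ‖T‖ := ContinuousLinearMap.le_opNorm _ _
          _ ≤ (ℓG : ℝ) * d * ‖T‖ := mul_le_mul_of_nonneg_right e4 (norm_nonneg _)
      have h3 : |Gp (kθ (c p) - T)| ≤ ‖Gp‖ * A := by
        calc |Gp (kθ (c p) - T)| = ‖Gp (kθ (c p) - T)‖ := (Real.norm_eq_abs _).symm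
          _ ≤ ‖Gp‖ * ‖kθ (c p) - T‖ := ContinuousLinearMap.le_opNorm _ _
          _ ≤ ‖Gp‖ * A := by
              refine mul_le_mul_of_nonneg_left (le_trans eθ ?_) (norm_nonneg _)
              rw [hAdef]
              have : (L : ℝ) * d ≤ (L : ℝ) * r₃ :=
                mul_le_mul_of_nonneg_left hd L.coe_nonneg
              linarith
      obtain ⟨h2a, h2b⟩ := abs_le.mp h2
      obtain ⟨h3a, h3b⟩ := abs_le.mp h3
      rw [hsplit]
      linarith
    have e9 : -(A ^ 2 / (4 * φ)) ≤ φ * ‖Gp‖ ^ 2 - ‖Gp‖ * A := aux_young φ ‖Gp‖ A hφpos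
    have e10 : α mlvl ≤ -(A ^ 2 / (4 * φ)) := by
      rw [hm]; exact aux_e10 φ A hφ1
    have hgoal : fderiv ℝ h p (f p + g p (kθ (c p)))
        = fderiv ℝ h p (f p) + Gp (kθ (c p)) := by
      rw [map_add]; rfl
    rw [hgoal]
    exact aux_combine φ a b r₃ d (ℓF : ℝ) (ℓα : ℝ) (ℓ₂ : ℝ) (ℓG : ℝ) A ‖T‖
      (fderiv ℝ h p (f p)) (fderiv ℝ h x₁ (f x₁)) (α (h p)) (α (h x₁))
      ‖Gp‖ ‖G₁‖ (Gp (kθ (c p))) (G₁ T) (α mlvl)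
      hφ1 hd hd0 ℓF.coe_nonneg ℓα.coe_nonneg ℓ₂.coe_nonneg ℓG.coe_nonneg
      (norm_nonneg _) ha hb e1a e2a e3b e5 e6 e9 e10
  -- Trajectory argument
  intro t₁ ht₁
  by_contra hcon
  push_neg at hcon
  have hy : ∀ t : ℝ, 0 ≤ t → HasDerivAt (fun s => h (x s))
      (fderiv ℝ h (x t) (f (x t) + g (x t) (kθ (c (x t))))) t := by
    intro t ht
    have h1 : HasFDerivAt h (fderiv ℝ h (x t)) (x t) :=
      (hh.differentiable one_ne_zero (x t)).hasFDerivAt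
    exact h1.comp_hasDerivAt t (hx t ht)
  have hcont : ∀ t : ℝ, 0 ≤ t → ContinuousAt (fun s => h (x s)) t :=
    fun t ht => (hy t ht).continuousAt
  have hmlvlδ : -δ₀ < mlvl := lt_of_lt_of_le (by linarith) hmδ
  set v : ℝ := (max (-δ₀) (h (x t₁)) + mlvl) / 2 with hvdef
  have hv1 : v < mlvl := by
    have := max_lt hmlvlδ hcon
    rw [hvdef]; linarith
  have hv2 : -δ₀ < v := by
    have := le_max_left (-δ₀) (h (x t₁))
    rw [hvdef]; linarith
  have hv3 : h (x t₁) < v := by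
    have := le_max_right (-δ₀) (h (x t₁))
    rw [hvdef]; linarith
  have hv0 : v < 0 := lt_of_lt_of_le hv1 hm0
  set B₁ : Set ℝ := {t | t ∈ Set.Icc (0 : ℝ) t₁ ∧ h (x t) ≤ v} with hB₁def
  have hB₁closed : IsClosed B₁ := by
    have hxc : ContinuousOn (fun s => h (x s)) (Set.Icc (0 : ℝ) t₁) :=
      fun t ht => (hcont t ht.1).continuousWithinAt
    exact hxc.preimage_isClosed_of_isClosed isClosed_Icc isClosed_Iic
  have hB₁ne : B₁.Nonempty := ⟨t₁, ⟨ht₁, le_rfl⟩, hv3.le⟩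
  have hB₁bdd : BddBelow B₁ := ⟨0, fun t ht => ht.1.1⟩
  set s' : ℝ := sInf B₁ with hs'def
  have hs'mem : s' ∈ B₁ := hB₁closed.csInf_mem hB₁ne hB₁bdd
  have hs'0 : 0 ≤ s' := hs'mem.1.1
  have hs't₁ : s' ≤ t₁ := hs'mem.1.2
  have hs'v : h (x s') ≤ v := hs'mem.2
  have hbefore : ∀ t : ℝ, 0 ≤ t → t < s' → v < h (x t) := by
    intro t h0 hts'
    by_contra hc
    push_neg at hc
    have htB : t ∈ B₁ := ⟨⟨h0, hts'.le.trans hs't₁⟩, hc⟩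
    exact absurd (csInf_le hB₁bdd htB) (not_le.mpr hts')
  set B₂ : Set ℝ := {t | t ∈ Set.Icc (0 : ℝ) s' ∧ mlvl ≤ h (x t)} with hB₂def
  have hB₂closed : IsClosed B₂ := by
    have hxc : ContinuousOn (fun s => h (x s)) (Set.Icc (0 : ℝ) s') :=
      fun t ht => (hcont t ht.1).continuousWithinAt
    exact hxc.preimage_isClosed_of_isClosed isClosed_Icc isClosed_Ici
  have hB₂ne : B₂.Nonempty := ⟨0, ⟨le_rfl, hs'0⟩, le_trans hm0 hx0⟩
  have hB₂bdd : BddAbove B₂ := ⟨s', fun t ht => ht.1.2⟩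
  set s₀ : ℝ := sSup B₂ with hs₀def
  have hs₀mem : s₀ ∈ B₂ := hB₂closed.csSup_mem hB₂ne hB₂bdd
  have hs₀0 : 0 ≤ s₀ := hs₀mem.1.1
  have hs₀s' : s₀ ≤ s' := hs₀mem.1.2
  have hs₀m : mlvl ≤ h (x s₀) := hs₀mem.2
  have hlt : s₀ < s' := by
    rcases lt_or_eq_of_le hs₀s' with h' | h'
    · exact h'
    · exfalso; rw [h'] at hs₀m; linarith
  have hmid : ∀ t ∈ Set.Ioo s₀ s', v < h (x t) ∧ h (x t) < mlvl := by
    intro t ht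
    constructor
    · exact hbefore t (le_trans hs₀0 ht.1.le) ht.2
    · by_contra hc
      push_neg at hc
      have htB : t ∈ B₂ := ⟨⟨le_trans hs₀0 ht.1.le, ht.2.le⟩, hc⟩
      exact absurd (le_csSup hB₂bdd htB) (not_le.mpr ht.1)
  have smono : StrictMonoOn (fun s => h (x s)) (Set.Icc s₀ s') := by
    apply strictMonoOn_of_deriv_pos (convex_Icc s₀ s')
    · exact fun t ht => (hcont t (le_trans hs₀0 ht.1)).continuousWithinAt
    · intro t ht
      rw [interior_Icc] at ht
      obtain ⟨htv, htm⟩ := hmid t ht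
      have hder := hy t (le_trans hs₀0 ht.1.le)
      rw [hder.deriv]
      have hk := key (x t) (by linarith) (by linarith)
      have : α (h (x t)) < α mlvl := hα_mono htm
      linarith
  have hfin := smono (Set.left_mem_Icc.mpr hlt.le) (Set.right_mem_Icc.mpr hlt.le) hlt
  simp only at hfin
  linarith
end
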